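/- Let p be an odd prime and k ≥ 1 an integer. If some GL₂(𝔽_p)-conjugate of C_ns(p)^k is contained in the subgroup ⟨γ, Z(p)⟩ generated by γ and the scalar matrices, then p + 1 divides gcd(k, p² − 1). -/

import Mathlib

open Matrix

abbrev GL2 (p : ℕ) := GL (Fin 2) (ZMod p)

/-- The subgroup `SL₂` of `GL₂(ℤ/nℤ)`, i.e. the kernel of the determinant. -/
def SL2sub (n : ℕ) : Subgroup (GL (Fin 2) (ZMod n)) :=
  (Matrix.GeneralLinearGroup.det : GL (Fin 2) (ZMod n) →* (ZMod n)ˣ).ker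

/-- The split Cartan subgroup: diagonal matrices in `GL₂(𝔽_p)`. -/
def Cs (p : ℕ) : Subgroup (GL2 p) where
  carrier := { g | (g : Matrix (Fin 2) (Fin 2) (ZMod p)) 0 1 = 0 ∧
      (g : Matrix (Fin 2) (Fin 2) (ZMod p)) 1 0 = 0 }
  one_mem' := by simp
  mul_mem' := by
    rintro a b ⟨ha1, ha2⟩ ⟨hb1, hb2⟩
    refine ⟨?_, ?_⟩ <;>
      simp [Units.val_mul, Matrix.mul_apply, Fin.sum_univ_two, ha1, ha2, hb1, hb2]
  inv_mem' := by
    rintro a ⟨h1, h2⟩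
    have h : ((a⁻¹ : GL2 p) : Matrix (Fin 2) (Fin 2) (ZMod p))
        = Ring.inverse ((a : Matrix (Fin 2) (Fin 2) (ZMod p)).det) •
          Matrix.adjugate (a : Matrix (Fin 2) (Fin 2) (ZMod p)) := by
      rw [Matrix.coe_units_inv, Matrix.inv_def]
    refine ⟨?_, ?_⟩ <;> simp [h, Matrix.adjugate_fin_two, h1, h2]

/-- The Borel subgroup: upper triangular matrices in `GL₂(𝔽_p)`. -/
def B0 (p : ℕ) : Subgroup (GL2 p) where
  carrier := { g | (g : Matrix (Fin 2) (Fin 2) (ZMod p)) 1 0 = 0 }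
  one_mem' := by simp
  mul_mem' := by
    intro a b ha hb
    simp only [Set.mem_setOf_eq] at *
    simp [Units.val_mul, Matrix.mul_apply, Fin.sum_univ_two, ha, hb]
  inv_mem' := by
    intro a h
    simp only [Set.mem_setOf_eq] at *
    have hh : ((a⁻¹ : GL2 p) : Matrix (Fin 2) (Fin 2) (ZMod p))
        = Ring.inverse ((a : Matrix (Fin 2) (Fin 2) (ZMod p)).det) •
          Matrix.adjugate (a : Matrix (Fin 2) (Fin 2) (ZMod p)) := by
      rw [Matrix.coe_units_inv, Matrix.inv_def]
    simp [hh, Matrix.adjugate_fin_two, h]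

/-- The subgroup of scalar matrices in `GL₂(𝔽_p)`. -/
def Zs (p : ℕ) : Subgroup (GL2 p) where
  carrier := { g | (g : Matrix (Fin 2) (Fin 2) (ZMod p)) 0 1 = 0 ∧
      (g : Matrix (Fin 2) (Fin 2) (ZMod p)) 1 0 = 0 ∧
      (g : Matrix (Fin 2) (Fin 2) (ZMod p)) 1 1 = (g : Matrix (Fin 2) (Fin 2) (ZMod p)) 0 0 }
  one_mem' := by simp
  mul_mem' := by
    rintro a b ⟨ha1, ha2, ha3⟩ ⟨hb1, hb2, hb3⟩
    refine ⟨?_, ?_, ?_⟩ <;>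
      simp [Units.val_mul, Matrix.mul_apply, Fin.sum_univ_two, ha1, ha2, ha3, hb1, hb2, hb3]
  inv_mem' := by
    rintro a ⟨h1, h2, h3⟩
    have hh : ((a⁻¹ : GL2 p) : Matrix (Fin 2) (Fin 2) (ZMod p))
        = Ring.inverse ((a : Matrix (Fin 2) (Fin 2) (ZMod p)).det) •
          Matrix.adjugate (a : Matrix (Fin 2) (Fin 2) (ZMod p)) := by
      rw [Matrix.coe_units_inv, Matrix.inv_def]
    refine ⟨?_, ?_, ?_⟩ <;> simp [hh, Matrix.adjugate_fin_two, h1, h2, h3]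

/-- The normalizer of the split Cartan subgroup: diagonal and antidiagonal matrices. -/
def Ns (p : ℕ) : Subgroup (GL2 p) where
  carrier := { g | ((g : Matrix (Fin 2) (Fin 2) (ZMod p)) 0 1 = 0 ∧
      (g : Matrix (Fin 2) (Fin 2) (ZMod p)) 1 0 = 0) ∨
      ((g : Matrix (Fin 2) (Fin 2) (ZMod p)) 0 0 = 0 ∧
      (g : Matrix (Fin 2) (Fin 2) (ZMod p)) 1 1 = 0) }
  one_mem' := by simp
  mul_mem' := by
    rintro a b (⟨ha1, ha2⟩ | ⟨ha1, ha2⟩) (⟨hb1, hb2⟩ | ⟨hb1, hb2⟩)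
    · refine Or.inl ⟨?_, ?_⟩ <;>
        simp [Units.val_mul, Matrix.mul_apply, Fin.sum_univ_two, ha1, ha2, hb1, hb2]
    · refine Or.inr ⟨?_, ?_⟩ <;>
        simp [Units.val_mul, Matrix.mul_apply, Fin.sum_univ_two, ha1, ha2, hb1, hb2]
    · refine Or.inr ⟨?_, ?_⟩ <;>
        simp [Units.val_mul, Matrix.mul_apply, Fin.sum_univ_two, ha1, ha2, hb1, hb2]
    · refine Or.inl ⟨?_, ?_⟩ <;>
        simp [Units.val_mul, Matrix.mul_apply, Fin.sum_univ_two, ha1, ha2, hb1, hb2]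
  inv_mem' := by
    intro a h
    have hh : ((a⁻¹ : GL2 p) : Matrix (Fin 2) (Fin 2) (ZMod p))
        = Ring.inverse ((a : Matrix (Fin 2) (Fin 2) (ZMod p)).det) •
          Matrix.adjugate (a : Matrix (Fin 2) (Fin 2) (ZMod p)) := by
      rw [Matrix.coe_units_inv, Matrix.inv_def]
    rcases h with ⟨h1, h2⟩ | ⟨h1, h2⟩
    · refine Or.inl ⟨?_, ?_⟩ <;> simp [hh, Matrix.adjugate_fin_two, h1, h2]
    · refine Or.inr ⟨?_, ?_⟩ <;> simp [hh, Matrix.adjugate_fin_two, h1, h2]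

/-- The nonsplit Cartan subgroup attached to a nonsquare `ε`:
invertible matrices of the form `[[a, bε], [b, a]]`. -/
def Cns (p : ℕ) (ε : ZMod p) : Subgroup (GL2 p) where
  carrier := { g | (g : Matrix (Fin 2) (Fin 2) (ZMod p)) 1 1 =
      (g : Matrix (Fin 2) (Fin 2) (ZMod p)) 0 0 ∧
      (g : Matrix (Fin 2) (Fin 2) (ZMod p)) 0 1 = ε * (g : Matrix (Fin 2) (Fin 2) (ZMod p)) 1 0 }
  one_mem' := by simp
  mul_mem' := by
    rintro a b ⟨ha1, ha2⟩ ⟨hb1, hb2⟩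
    refine ⟨?_, ?_⟩ <;>
      simp [Units.val_mul, Matrix.mul_apply, Fin.sum_univ_two, ha1, ha2, hb1, hb2] <;>
      try ring
  inv_mem' := by
    rintro a ⟨h1, h2⟩
    have hh : ((a⁻¹ : GL2 p) : Matrix (Fin 2) (Fin 2) (ZMod p))
        = Ring.inverse ((a : Matrix (Fin 2) (Fin 2) (ZMod p)).det) •
          Matrix.adjugate (a : Matrix (Fin 2) (Fin 2) (ZMod p)) := by
      rw [Matrix.coe_units_inv, Matrix.inv_def]
    refine ⟨?_, ?_⟩ <;> simp [hh, Matrix.adjugate_fin_two, h1, h2] <;> try ring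

/-- The normalizer of the nonsplit Cartan subgroup:
matrices `[[a, bε], [b, a]]` together with matrices `[[a, bε], [-b, -a]]`. -/
def Nns (p : ℕ) (ε : ZMod p) : Subgroup (GL2 p) where
  carrier := { g | ((g : Matrix (Fin 2) (Fin 2) (ZMod p)) 1 1 =
      (g : Matrix (Fin 2) (Fin 2) (ZMod p)) 0 0 ∧
      (g : Matrix (Fin 2) (Fin 2) (ZMod p)) 0 1 = ε * (g : Matrix (Fin 2) (Fin 2) (ZMod p)) 1 0) ∨
      ((g : Matrix (Fin 2) (Fin 2) (ZMod p)) 1 1 =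
      -(g : Matrix (Fin 2) (Fin 2) (ZMod p)) 0 0 ∧
      (g : Matrix (Fin 2) (Fin 2) (ZMod p)) 0 1 =
        -(ε * (g : Matrix (Fin 2) (Fin 2) (ZMod p)) 1 0)) }
  one_mem' := by simp
  mul_mem' := by
    rintro a b (⟨ha1, ha2⟩ | ⟨ha1, ha2⟩) (⟨hb1, hb2⟩ | ⟨hb1, hb2⟩)
    · refine Or.inl ⟨?_, ?_⟩ <;>
        simp [Units.val_mul, Matrix.mul_apply, Fin.sum_univ_two, ha1, ha2, hb1, hb2] <;>
        try ring
    · refine Or.inr ⟨?_, ?_⟩ <;>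
        simp [Units.val_mul, Matrix.mul_apply, Fin.sum_univ_two, ha1, ha2, hb1, hb2] <;>
        try ring
    · refine Or.inr ⟨?_, ?_⟩ <;>
        simp [Units.val_mul, Matrix.mul_apply, Fin.sum_univ_two, ha1, ha2, hb1, hb2] <;>
        try ring
    · refine Or.inl ⟨?_, ?_⟩ <;>
        simp [Units.val_mul, Matrix.mul_apply, Fin.sum_univ_two, ha1, ha2, hb1, hb2] <;>
        try ring
  inv_mem' := by
    intro a h
    have hh : ((a⁻¹ : GL2 p) : Matrix (Fin 2) (Fin 2) (ZMod p))
        = Ring.inverse ((a : Matrix (Fin 2) (Fin 2) (ZMod p)).det) •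
          Matrix.adjugate (a : Matrix (Fin 2) (Fin 2) (ZMod p)) := by
      rw [Matrix.coe_units_inv, Matrix.inv_def]
    rcases h with ⟨h1, h2⟩ | ⟨h1, h2⟩
    · refine Or.inl ⟨?_, ?_⟩ <;> simp [hh, Matrix.adjugate_fin_two, h1, h2] <;> try ring
    · refine Or.inr ⟨?_, ?_⟩ <;> simp [hh, Matrix.adjugate_fin_two, h1, h2] <;> try ring
/-- The matrix `γ = [[1,1],[0,1]]` as an element of `GL₂(𝔽_p)`. -/
def gam (p : ℕ) : GL2 p where
  val := !![1, 1; 0, 1]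
  inv := !![1, -1; 0, 1]
  val_inv := by
    ext i j
    fin_cases i <;> fin_cases j <;>
      simp [Matrix.mul_apply, Fin.sum_univ_two, Matrix.one_apply]
  inv_val := by
    ext i j
    fin_cases i <;> fin_cases j <;>
      simp [Matrix.mul_apply, Fin.sum_univ_two, Matrix.one_apply]

/-- The diagonal matrix `diag(a, 1)` as an element of `GL₂(𝔽_p)`. -/
def dMat (p : ℕ) (a : (ZMod p)ˣ) : GL2 p where
  val := !![(a : ZMod p), 0; 0, 1]
  inv := !![((a⁻¹ : (ZMod p)ˣ) : ZMod p), 0; 0, 1]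
  val_inv := by
    ext i j
    fin_cases i <;> fin_cases j <;>
      simp [Matrix.mul_apply, Fin.sum_univ_two, Matrix.one_apply, ← Units.val_mul]
  inv_val := by
    ext i j
    fin_cases i <;> fin_cases j <;>
      simp [Matrix.mul_apply, Fin.sum_univ_two, Matrix.one_apply, ← Units.val_mul]

/-- `a ↦ diag(a, 1)` as a group homomorphism `𝔽_p^× → GL₂(𝔽_p)`. -/
def dHom (p : ℕ) : (ZMod p)ˣ →* GL2 p where
  toFun := dMat p
  map_one' := by
    refine Units.ext ?_
    simp only [dMat]
    ext i j
    fin_cases i <;> fin_cases j <;> simp [Matrix.one_apply]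
  map_mul' := by
    intro a b
    refine Units.ext ?_
    simp only [dMat, Units.val_mul]
    ext i j
    fin_cases i <;> fin_cases j <;> simp [Matrix.mul_apply, Fin.sum_univ_two]

/-- The semi-Cartan power subgroup `D^k = { diag(a^k, 1) : a ∈ 𝔽_p^× }`. -/
def Dpow (p k : ℕ) : Subgroup (GL2 p) :=
  ((dHom p).comp (powMonoidHom k)).range

/-- The diagonal matrix `diag(1, a)` as an element of `GL₂(𝔽_p)`. -/
def dMatF (p : ℕ) (a : (ZMod p)ˣ) : GL2 p where
  val := !![1, 0; 0, (a : ZMod p)]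
  inv := !![1, 0; 0, ((a⁻¹ : (ZMod p)ˣ) : ZMod p)]
  val_inv := by
    ext i j
    fin_cases i <;> fin_cases j <;>
      simp [Matrix.mul_apply, Fin.sum_univ_two, Matrix.one_apply, ← Units.val_mul]
  inv_val := by
    ext i j
    fin_cases i <;> fin_cases j <;>
      simp [Matrix.mul_apply, Fin.sum_univ_two, Matrix.one_apply, ← Units.val_mul]

/-- `a ↦ diag(1, a)` as a group homomorphism `𝔽_p^× → GL₂(𝔽_p)`. -/
def dHomF (p : ℕ) : (ZMod p)ˣ →* GL2 p where
  toFun := dMatF p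
  map_one' := by
    refine Units.ext ?_
    simp only [dMatF]
    ext i j
    fin_cases i <;> fin_cases j <;> simp [Matrix.one_apply]
  map_mul' := by
    intro a b
    refine Units.ext ?_
    simp only [dMatF, Units.val_mul]
    ext i j
    fin_cases i <;> fin_cases j <;> simp [Matrix.mul_apply, Fin.sum_univ_two]

/-- The flip `(D^k)_f = { diag(1, a^k) : a ∈ 𝔽_p^× }` of the semi-Cartan power subgroup. -/
def DpowF (p k : ℕ) : Subgroup (GL2 p) :=
  ((dHomF p).comp (powMonoidHom k)).range

/-- Any two elements of the nonsplit Cartan subgroup commute. -/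
lemma cns_comm {p : ℕ} {ε : ZMod p} {a b : GL2 p} (ha : a ∈ Cns p ε) (hb : b ∈ Cns p ε) :
    a * b = b * a := by
  obtain ⟨ha1, ha2⟩ := ha
  obtain ⟨hb1, hb2⟩ := hb
  refine Units.ext ?_
  ext i j
  fin_cases i <;> fin_cases j <;>
    · simp only [Units.val_mul]
      simp [Matrix.mul_apply, Fin.sum_univ_two, ha1, ha2, hb1, hb2]
      ring

/-- The subgroup `C_ns(p)^k` of `k`-th powers of elements of the nonsplit Cartan subgroup. -/
def CnsPow (p : ℕ) (ε : ZMod p) (k : ℕ) : Subgroup (GL2 p) where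
  carrier := { g | ∃ x ∈ Cns p ε, x ^ k = g }
  one_mem' := ⟨1, (Cns p ε).one_mem, one_pow k⟩
  mul_mem' := by
    rintro a b ⟨x, hx, rfl⟩ ⟨y, hy, rfl⟩
    exact ⟨x * y, (Cns p ε).mul_mem hx hy,
      Commute.mul_pow (cns_comm hx hy) k⟩
  inv_mem' := by
    rintro a ⟨x, hx, rfl⟩
    exact ⟨x⁻¹, (Cns p ε).inv_mem hx, by rw [inv_pow]⟩

/-- The conjugate subgroup `m H m⁻¹`. -/
def conjSub {p : ℕ} (m : GL2 p) (H : Subgroup (GL2 p)) : Subgroup (GL2 p) :=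
  Subgroup.map (MulAut.conj m).toMonoidHom H

namespace Stmt14Aux

/-- The subring of matrices of the shape `[[a, εb],[b, a]]`. -/
def Ssub (p : ℕ) (ε : ZMod p) : Subring (Matrix (Fin 2) (Fin 2) (ZMod p)) where
  carrier := { M | M 1 1 = M 0 0 ∧ M 0 1 = ε * M 1 0 }
  zero_mem' := by simp
  one_mem' := by simp [Matrix.one_apply]
  add_mem' := by
    rintro a b ⟨ha1, ha2⟩ ⟨hb1, hb2⟩
    constructor <;> simp [Matrix.add_apply, ha1, ha2, hb1, hb2] <;> ring
  neg_mem' := by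
    rintro a ⟨h1, h2⟩
    constructor <;> simp [Matrix.neg_apply, h1, h2]
  mul_mem' := by
    rintro a b ⟨ha1, ha2⟩ ⟨hb1, hb2⟩
    constructor <;>
      simp [Matrix.mul_apply, Fin.sum_univ_two, ha1, ha2, hb1, hb2] <;> ring

lemma mem_Ssub_iff {p : ℕ} {ε : ZMod p} {M : Matrix (Fin 2) (Fin 2) (ZMod p)} :
    M ∈ Ssub p ε ↔ (M 1 1 = M 0 0 ∧ M 0 1 = ε * M 1 0) := Iff.rfl

lemma ssub_comm {p : ℕ} {ε : ZMod p} (x y : Ssub p ε) : x * y = y * x := by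
  obtain ⟨x, hx1, hx2⟩ := x
  obtain ⟨y, hy1, hy2⟩ := y
  apply Subtype.ext
  show x * y = y * x
  ext i j
  fin_cases i <;> fin_cases j <;>
    · simp [Matrix.mul_apply, Fin.sum_univ_two, hx1, hx2, hy1, hy2]
      ring

/-- `Ssub` is a commutative ring. -/
@[reducible] def ssubCommRing (p : ℕ) (ε : ZMod p) : CommRing (Ssub p ε) :=
  { (inferInstance : Ring (Ssub p ε)) with mul_comm := ssub_comm }

lemma ssub_det_ne {p : ℕ} [Fact p.Prime] {ε : ZMod p} (hε : ∀ x : ZMod p, x ^ 2 ≠ ε)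
    {a b : ZMod p} (h : ¬(a = 0 ∧ b = 0)) : a ^ 2 - ε * b ^ 2 ≠ 0 := by
  intro hd
  have hab : a ^ 2 = ε * b ^ 2 := by linear_combination hd
  by_cases hb : b = 0
  · subst hb
    have ha : a = 0 := by simpa using hab
    exact h ⟨ha, rfl⟩
  · apply hε (a * b⁻¹)
    field_simp
    linear_combination hab

lemma ssub_exists_inv {p : ℕ} [Fact p.Prime] {ε : ZMod p} (hε : ∀ x : ZMod p, x ^ 2 ≠ ε)
    (x : Ssub p ε) (hx : x ≠ 0) : ∃ z : Ssub p ε, z * x = 1 := by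
  obtain ⟨M, h1, h2⟩ := x
  set a := M 0 0 with ha
  set b := M 1 0 with hb
  have hMne : ¬(a = 0 ∧ b = 0) := by
    rintro ⟨e1, e2⟩
    apply hx
    apply Subtype.ext
    show M = 0
    ext i j
    fin_cases i <;> fin_cases j <;> simp [h1, h2, ← ha, ← hb, e1, e2]
  have hd : a ^ 2 - ε * b ^ 2 ≠ 0 := ssub_det_ne hε hMne
  set d := a ^ 2 - ε * b ^ 2 with hdd
  refine ⟨⟨d⁻¹ • !![a, -(ε * b); -b, a], ?_, ?_⟩, ?_⟩
  · simp [Matrix.smul_apply]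
  · simp [Matrix.smul_apply]; ring
  · apply Subtype.ext
    show (d⁻¹ • !![a, -(ε * b); -b, a]) * M = 1
    have hM : M = !![a, ε * b; b, a] := by
      ext i j
      fin_cases i <;> fin_cases j <;> simp [h1, h2, ← ha, ← hb]
    rw [hM]
    ext i j
    fin_cases i <;> fin_cases j <;>
      · simp [Matrix.mul_apply, Fin.sum_univ_two, Matrix.smul_apply, Matrix.one_apply]
        field_simp
        ring
  
/-- The parametrization of `Ssub` by pairs. -/
def ssubEquiv (p : ℕ) (ε : ZMod p) : Ssub p ε ≃ ZMod p × ZMod p where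
  toFun x := (x.1 0 0, x.1 1 0)
  invFun a := ⟨!![a.1, ε * a.2; a.2, a.1], by constructor <;> simp⟩
  left_inv x := by
    obtain ⟨M, h1, h2⟩ := x
    apply Subtype.ext
    show !![M 0 0, ε * M 1 0; M 1 0, M 0 0] = M
    ext i j
    fin_cases i <;> fin_cases j <;> simp [h1, h2]
  right_inv a := by simp

/-- The subgroup of upper triangular matrices with equal diagonal entries. -/
def Usub (p : ℕ) : Subgroup (GL2 p) where
  carrier := { g | (g : Matrix (Fin 2) (Fin 2) (ZMod p)) 1 0 = 0 ∧
      (g : Matrix (Fin 2) (Fin 2) (ZMod p)) 1 1 = (g : Matrix (Fin 2) (Fin 2) (ZMod p)) 0 0 }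
  one_mem' := by simp
  mul_mem' := by
    rintro a b ⟨ha1, ha2⟩ ⟨hb1, hb2⟩
    refine ⟨?_, ?_⟩ <;>
      simp [Units.val_mul, Matrix.mul_apply, Fin.sum_univ_two, ha1, ha2, hb1, hb2]
  inv_mem' := by
    rintro a ⟨h1, h2⟩
    have hh : ((a⁻¹ : GL2 p) : Matrix (Fin 2) (Fin 2) (ZMod p))
        = Ring.inverse ((a : Matrix (Fin 2) (Fin 2) (ZMod p)).det) •
          Matrix.adjugate (a : Matrix (Fin 2) (Fin 2) (ZMod p)) := by
      rw [Matrix.coe_units_inv, Matrix.inv_def]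
    refine ⟨?_, ?_⟩ <;> simp [hh, Matrix.adjugate_fin_two, h1, h2]

end Stmt14Aux

theorem stmt14 (p : ℕ) [Fact p.Prime] (hp2 : p ≠ 2)
    (k : ℕ) (hk : 1 ≤ k)
    (ε : ZMod p) (hε : ∀ x : ZMod p, x ^ 2 ≠ ε)
    (hconj : ∃ m : GL2 p,
      conjSub m (CnsPow p ε k) ≤ Subgroup.closure ({gam p} ∪ (↑(Zs p) : Set (GL2 p)))) :
    (p + 1) ∣ Nat.gcd k (p ^ 2 - 1) := by
  classical
  have hp : p.Prime := Fact.out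
  haveI : Fact (1 < p) := ⟨hp.one_lt⟩
  obtain ⟨m, hm⟩ := hconj
  have hcl : Subgroup.closure ({gam p} ∪ (↑(Zs p) : Set (GL2 p))) ≤ Stmt14Aux.Usub p := by
    rw [Subgroup.closure_le]
    rintro g (hg | hg)
    · rcases hg with rfl
      constructor <;> simp [gam]
    · exact ⟨hg.2.1, hg.2.2⟩
  have htwo : (2 : ZMod p) ≠ 0 := by
    intro h
    have h2 : ((2 : ℕ) : ZMod p) = 0 := by exact_mod_cast h
    have hdvd2 := (ZMod.natCast_eq_zero_iff 2 p).mp h2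
    exact hp2 ((Nat.prime_dvd_prime_iff_eq hp Nat.prime_two).mp hdvd2)
  have hε0 : ε ≠ 0 := fun h => hε 0 (by simp [h])
  have key : ∀ y : GL2 p, y ∈ Cns p ε → ∃ c : ZMod p, c ≠ 0 ∧
      ((y ^ k : GL2 p) : Matrix (Fin 2) (Fin 2) (ZMod p)) = c • 1 := by
    intro y hy
    have hyk : y ^ k ∈ Cns p ε := pow_mem hy k
    obtain ⟨hY1, hY2⟩ := hyk
    have hmem0 : (MulAut.conj m).toMonoidHom (y ^ k) ∈ conjSub m (CnsPow p ε k) :=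
      Subgroup.mem_map_of_mem _ (show y ^ k ∈ CnsPow p ε k from ⟨y, hy, rfl⟩)
    obtain ⟨hN1, hN2⟩ := hcl (hm hmem0)
    simp only [MulEquiv.coe_toMonoidHom, MulAut.conj_apply] at hN1 hN2
    have hinvmul : ((m⁻¹ : GL2 p) : Matrix (Fin 2) (Fin 2) (ZMod p)) *
        (m : Matrix (Fin 2) (Fin 2) (ZMod p)) = 1 := by
      rw [← Units.val_mul, inv_mul_cancel, Units.val_one]
    have hNe : ((m * y ^ k * m⁻¹ : GL2 p) : Matrix (Fin 2) (Fin 2) (ZMod p)) =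
        ((m : Matrix (Fin 2) (Fin 2) (ZMod p)) * ((y ^ k : GL2 p) : Matrix (Fin 2) (Fin 2) (ZMod p)))
          * ((m⁻¹ : GL2 p) : Matrix (Fin 2) (Fin 2) (ZMod p)) := by
      simp [Units.val_mul]
    have htr : Matrix.trace ((m * y ^ k * m⁻¹ : GL2 p) : Matrix (Fin 2) (Fin 2) (ZMod p)) =
        Matrix.trace ((y ^ k : GL2 p) : Matrix (Fin 2) (Fin 2) (ZMod p)) := by
      rw [hNe, Matrix.trace_mul_comm, ← mul_assoc, hinvmul, one_mul]
    have hdet : ((m * y ^ k * m⁻¹ : GL2 p) : Matrix (Fin 2) (Fin 2) (ZMod p)).det =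
        ((y ^ k : GL2 p) : Matrix (Fin 2) (Fin 2) (ZMod p)).det := by
      rw [hNe, Matrix.det_mul, Matrix.det_mul]
      have h3 : ((m⁻¹ : GL2 p) : Matrix (Fin 2) (Fin 2) (ZMod p)).det *
          (m : Matrix (Fin 2) (Fin 2) (ZMod p)).det = 1 := by
        rw [← Matrix.det_mul, hinvmul, Matrix.det_one]
      calc (m : Matrix (Fin 2) (Fin 2) (ZMod p)).det *
            ((y ^ k : GL2 p) : Matrix (Fin 2) (Fin 2) (ZMod p)).det *
            ((m⁻¹ : GL2 p) : Matrix (Fin 2) (Fin 2) (ZMod p)).det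
          = (((m⁻¹ : GL2 p) : Matrix (Fin 2) (Fin 2) (ZMod p)).det *
            (m : Matrix (Fin 2) (Fin 2) (ZMod p)).det) *
            ((y ^ k : GL2 p) : Matrix (Fin 2) (Fin 2) (ZMod p)).det := by ring
        _ = ((y ^ k : GL2 p) : Matrix (Fin 2) (Fin 2) (ZMod p)).det := by rw [h3, one_mul]
    rw [Matrix.trace_fin_two, Matrix.trace_fin_two, hN2, hY1] at htr
    have hNY : ((m * y ^ k * m⁻¹ : GL2 p) : Matrix (Fin 2) (Fin 2) (ZMod p)) 0 0 =
        ((y ^ k : GL2 p) : Matrix (Fin 2) (Fin 2) (ZMod p)) 0 0 :=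
      mul_left_cancel₀ htwo (by linear_combination htr)
    rw [Matrix.det_fin_two, Matrix.det_fin_two, hN1, hN2, hY1, hY2, hNY] at hdet
    have hb0 : ((y ^ k : GL2 p) : Matrix (Fin 2) (Fin 2) (ZMod p)) 1 0 = 0 := by
      have hsq : ε * (((y ^ k : GL2 p) : Matrix (Fin 2) (Fin 2) (ZMod p)) 1 0 *
          ((y ^ k : GL2 p) : Matrix (Fin 2) (Fin 2) (ZMod p)) 1 0) = 0 := by
        linear_combination hdet
      exact mul_self_eq_zero.mp ((mul_eq_zero.mp hsq).resolve_left hε0)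
    have hdetY : IsUnit ((y ^ k : GL2 p) : Matrix (Fin 2) (Fin 2) (ZMod p)).det := by
      have h4 : ((y ^ k : GL2 p) : Matrix (Fin 2) (Fin 2) (ZMod p)).det *
          (((y ^ k)⁻¹ : GL2 p) : Matrix (Fin 2) (Fin 2) (ZMod p)).det = 1 := by
        rw [← Matrix.det_mul, ← Units.val_mul, mul_inv_cancel, Units.val_one, Matrix.det_one]
      exact IsUnit.of_mul_eq_one _ h4
    have hc : ((y ^ k : GL2 p) : Matrix (Fin 2) (Fin 2) (ZMod p)) 0 0 ≠ 0 := by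
      intro h0
      rw [Matrix.det_fin_two, hY1, hY2, hb0, h0] at hdetY
      simp at hdetY
    refine ⟨((y ^ k : GL2 p) : Matrix (Fin 2) (Fin 2) (ZMod p)) 0 0, hc, ?_⟩
    ext i j
    fin_cases i <;> fin_cases j <;>
      simp [Matrix.smul_apply, Matrix.one_apply, hY1, hY2, hb0]
  -- Now the field structure on Ssub.
  letI : CommRing (Stmt14Aux.Ssub p ε) := Stmt14Aux.ssubCommRing p ε
  haveI : Nontrivial (Stmt14Aux.Ssub p ε) :=
    nontrivial_of_ne 0 1 (fun h => zero_ne_one (α := Matrix (Fin 2) (Fin 2) (ZMod p))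
      (congrArg Subtype.val h))
  haveI : NoZeroDivisors (Stmt14Aux.Ssub p ε) := by
    refine ⟨fun {x y} hxy => ?_⟩
    by_cases hx : x = 0
    · exact Or.inl hx
    · obtain ⟨z, hz⟩ := Stmt14Aux.ssub_exists_inv hε x hx
      refine Or.inr ?_
      calc y = (z * x) * y := by rw [hz, one_mul]
        _ = z * (x * y) := by ring
        _ = 0 := by rw [hxy, mul_zero]
  haveI : IsDomain (Stmt14Aux.Ssub p ε) := NoZeroDivisors.to_isDomain _
  letI : Field (Stmt14Aux.Ssub p ε) := (Finite.isDomain_to_isField (Stmt14Aux.Ssub p ε)).toField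
  obtain ⟨u, hu⟩ := IsCyclic.exists_ofOrder_eq_natCard (α := (Stmt14Aux.Ssub p ε)ˣ)
  have hcardS : Nat.card (Stmt14Aux.Ssub p ε) = p ^ 2 := by
    rw [Nat.card_congr (Stmt14Aux.ssubEquiv p ε), Nat.card_prod, Nat.card_zmod]
    ring
  have hcardU : Nat.card (Stmt14Aux.Ssub p ε)ˣ = p ^ 2 - 1 := by
    rw [Nat.card_units, hcardS]
  let jmap : (Stmt14Aux.Ssub p ε)ˣ →* GL2 p :=
    Units.map (Stmt14Aux.Ssub p ε).subtype.toMonoidHom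
  have hjinj : Function.Injective jmap :=
    Units.map_injective (f := (Stmt14Aux.Ssub p ε).subtype.toMonoidHom) Subtype.coe_injective
  have horder : orderOf (jmap u) = p ^ 2 - 1 := by
    rw [orderOf_injective jmap hjinj u, hu, hcardU]
  have hxCns : jmap u ∈ Cns p ε := u.1.2
  obtain ⟨c, hc, hxk⟩ := key (jmap u) hxCns
  have hpow1 : (jmap u) ^ (k * (p - 1)) = 1 := by
    apply Units.ext
    show ((jmap u ^ (k * (p - 1)) : GL2 p) : Matrix (Fin 2) (Fin 2) (ZMod p)) =
      ((1 : GL2 p) : Matrix (Fin 2) (Fin 2) (ZMod p))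
    rw [Units.val_one, pow_mul, Units.val_pow_eq_pow_val, hxk, smul_pow, one_pow,
      ZMod.pow_card_sub_one_eq_one hc, one_smul]
  have hdvd : p ^ 2 - 1 ∣ k * (p - 1) := by
    rw [← horder]
    exact orderOf_dvd_of_pow_eq_one hpow1
  have hfac : p ^ 2 - 1 = (p + 1) * (p - 1) := by
    obtain ⟨q, rfl⟩ : ∃ q, p = q + 1 := ⟨p - 1, by have := hp.two_le; omega⟩
    simp only [Nat.add_sub_cancel]
    have h1 : (q + 1) ^ 2 = (q + 1 + 1) * q + 1 := by ring
    rw [h1, Nat.add_sub_cancel]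
  have hppos : 0 < p - 1 := by have := hp.two_le; omega
  have hkd : (p + 1) ∣ k := by
    rw [hfac] at hdvd
    exact (Nat.mul_dvd_mul_iff_right hppos).mp hdvd
  exact Nat.dvd_gcd hkd (by rw [hfac]; exact dvd_mul_right _ _)
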